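/- Let M = (M_α)_{α∈ℕ₀^d} and N = (N_α)_{α∈ℕ₀^d} be positive multi-indexed sequences satisfying: there exist H, C, B > 0 such that α^{α/2} M_β ≤ B C^{|α|} H^{|α+β|} N_{α+β} for all α, β ∈ ℕ₀^d (with 0^0 := 1). Then lim_{|α|→∞} (N_α)^{1/|α|} = +∞. -/

import Mathlib

open scoped BigOperators
open Filter

private lemma aux_one_le (k : ℕ) : 1 ≤ (k : ℝ) ^ ((k : ℝ) / 2) := by
  rcases Nat.eq_zero_or_pos k with hk | hk
  · subst hk; simp
  · have h1 : (1:ℝ) ≤ (k:ℝ) := by exact_mod_cast hk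
    exact Real.one_le_rpow h1 (by positivity)

private lemma aux_single_le {d : ℕ} (α : Fin d → ℕ) (j : Fin d) :
    ((α j : ℝ) ^ ((α j : ℝ) / 2)) ≤ ∏ i, ((α i : ℝ) ^ ((α i : ℝ) / 2)) := by
  have h := Finset.prod_le_prod (s := Finset.univ)
    (f := fun i : Fin d => if i = j then ((α j : ℝ) ^ ((α j : ℝ) / 2)) else 1)
    (g := fun i : Fin d => ((α i : ℝ) ^ ((α i : ℝ) / 2)))
    (fun i _ => by split <;> positivity)
    (fun i _ => by
      split
      · next hij => subst hij; exact le_rfl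
      · exact aux_one_le (α i))
  simpa [Finset.prod_ite_eq'] using h

/-- If `α^{α/2} M_β ≤ B C^{|α|} H^{|α+β|} N_{α+β}` for some `H, C, B > 0` and
all `α, β ∈ ℕ₀^d`, then `(N_α)^{1/|α|} → ∞` as `|α| → ∞`.
Here `α^{α/2} = ∏_j α_j^{α_j/2}` with the convention `0^0 = 1` (via `rpow`). -/
theorem stmt8 (d : ℕ) (M N : (Fin d → ℕ) → ℝ)
    (hMpos : ∀ α, 0 < M α) (hNpos : ∀ α, 0 < N α)
    (h : ∃ H C B : ℝ, 0 < H ∧ 0 < C ∧ 0 < B ∧ ∀ α β : Fin d → ℕ,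
      (∏ j, ((α j : ℝ) ^ ((α j : ℝ) / 2))) * M β ≤
        B * C ^ (∑ j, α j) * H ^ (∑ j, (α j + β j)) * N (α + β)) :
    Filter.Tendsto (fun α : Fin d → ℕ => (N α) ^ ((∑ j, α j : ℝ)⁻¹))
      (Filter.comap (fun α : Fin d → ℕ => ∑ j, α j) Filter.atTop) Filter.atTop := by
  obtain ⟨H, C, B, hH, hC, hB, hineq⟩ := h
  rcases Nat.eq_zero_or_pos d with hd | hd
  · subst hd
    have hbot : Filter.comap (fun α : Fin 0 → ℕ => ∑ j, α j) Filter.atTop = ⊥ := by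
      rw [← Filter.empty_mem_iff_bot]
      refine Filter.mem_comap.2 ⟨Set.Ici 1, Filter.mem_atTop 1, ?_⟩
      intro α hα
      simp at hα
    rw [hbot]
    exact tendsto_bot
  set c : ℝ := min (M 0 / B) 1 with hcdef
  have hc0 : 0 < c := lt_min (div_pos (hMpos 0) hB) one_pos
  have hc1 : c ≤ 1 := min_le_right _ _
  set K : ℝ := C * H with hKdef
  have hK0 : 0 < K := mul_pos hC hH
  have hd0 : (0:ℝ) < d := by exact_mod_cast hd
  set g : ℕ → ℝ := fun n => c * K⁻¹ * (((n:ℝ)/d) ^ ((1:ℝ)/(2*d))) with hgdef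
  have hg : Tendsto g atTop atTop := by
    have t1 : Tendsto (fun n : ℕ => (n:ℝ)/d) atTop atTop :=
      (tendsto_natCast_atTop_atTop).atTop_div_const hd0
    have t2 := (tendsto_rpow_atTop (by positivity : (0:ℝ) < 1/(2*(d:ℝ)))).comp t1
    exact t2.const_mul_atTop (mul_pos hc0 (inv_pos.2 hK0))
  have key : ∀ n : ℕ, d ≤ n → ∀ α : Fin d → ℕ, (∑ j, α j) = n →
      g n ≤ N α ^ ((n:ℝ)⁻¹) := by
    intro n hn α hα
    have hn1 : 1 ≤ n := le_trans hd hn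
    have hnR : (0:ℝ) < n := by exact_mod_cast hn1
    obtain ⟨j, -, hj⟩ : ∃ j ∈ Finset.univ, n ≤ d * α j := by
      refine Finset.exists_le_of_sum_le (Finset.univ_nonempty_iff.2 ?_) ?_
      · exact ⟨⟨0, hd⟩⟩
      · simp only [Finset.sum_const, Finset.card_univ, Fintype.card_fin, smul_eq_mul,
          ← Finset.mul_sum, hα]
        rw [mul_comm]
    set m : ℕ := α j with hmdef
    have hm1 : 1 ≤ m := by
      rcases Nat.eq_zero_or_pos m with hm | hm
      · rw [hm, Nat.mul_zero] at hj; omega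
      · exact hm
    have hmR : (1:ℝ) ≤ m := by exact_mod_cast hm1
    have hdm : (n:ℝ) ≤ (d:ℝ) * m := by exact_mod_cast hj
    have hbase : (m:ℝ) ^ ((m:ℝ)/2) * M 0 ≤ B * K ^ n * N α := by
      have h0 := hineq α 0
      simp only [Pi.zero_apply, add_zero, hα] at h0
      calc (m:ℝ) ^ ((m:ℝ)/2) * M 0
          ≤ (∏ j', ((α j' : ℝ) ^ ((α j' : ℝ) / 2))) * M 0 :=
            mul_le_mul_of_nonneg_right (aux_single_le α j) (hMpos 0).le
        _ ≤ B * C ^ n * H ^ n * N α := h0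
        _ = B * K ^ n * N α := by rw [hKdef, mul_pow]; ring
    have hKn : (0:ℝ) < K ^ n := pow_pos hK0 n
    have hNlb : c * ((K:ℝ) ^ n)⁻¹ * (m:ℝ) ^ ((m:ℝ)/2) ≤ N α := by
      have h2 : (m:ℝ) ^ ((m:ℝ)/2) * M 0 / (B * K ^ n) ≤ N α := by
        rw [div_le_iff₀ (by positivity)]
        nlinarith [hbase, (hNpos α), hKn]
      calc c * ((K:ℝ) ^ n)⁻¹ * (m:ℝ) ^ ((m:ℝ)/2)
          ≤ (M 0 / B) * ((K:ℝ) ^ n)⁻¹ * (m:ℝ) ^ ((m:ℝ)/2) := by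
            have hcle : c ≤ M 0 / B := min_le_left _ _
            have hnn : (0:ℝ) ≤ ((K:ℝ) ^ n)⁻¹ * (m:ℝ) ^ ((m:ℝ)/2) := by positivity
            calc c * ((K:ℝ) ^ n)⁻¹ * (m:ℝ) ^ ((m:ℝ)/2)
                = c * (((K:ℝ) ^ n)⁻¹ * (m:ℝ) ^ ((m:ℝ)/2)) := by ring
              _ ≤ (M 0 / B) * (((K:ℝ) ^ n)⁻¹ * (m:ℝ) ^ ((m:ℝ)/2)) :=
                  mul_le_mul_of_nonneg_right hcle hnn
              _ = (M 0 / B) * ((K:ℝ) ^ n)⁻¹ * (m:ℝ) ^ ((m:ℝ)/2) := by ring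
          _ = (m:ℝ) ^ ((m:ℝ)/2) * M 0 / (B * K ^ n) := by
            field_simp
          _ ≤ N α := h2
    have hrw : (c * ((K:ℝ) ^ n)⁻¹ * (m:ℝ) ^ ((m:ℝ)/2)) ^ ((n:ℝ)⁻¹)
        = c ^ ((n:ℝ)⁻¹) * K⁻¹ * (m:ℝ) ^ ((m:ℝ)/(2*n)) := by
      rw [Real.mul_rpow (by positivity) (by positivity),
          Real.mul_rpow (by positivity) (by positivity)]
      congr 1
      · congr 1
        rw [← Real.rpow_natCast K n, ← Real.rpow_neg hK0.le, ← Real.rpow_mul hK0.le,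
          neg_mul, mul_inv_cancel₀ hnR.ne', Real.rpow_neg_one]
      · rw [← Real.rpow_mul (by positivity)]
        congr 1
        field_simp
    have hcomp : g n ≤ c ^ ((n:ℝ)⁻¹) * K⁻¹ * (m:ℝ) ^ ((m:ℝ)/(2*n)) := by
      have e1 : c ≤ c ^ ((n:ℝ)⁻¹) := by
        nth_rewrite 1 [← Real.rpow_one c]
        refine Real.rpow_le_rpow_of_exponent_ge hc0 hc1 ?_
        rw [inv_le_one_iff₀]
        right
        exact_mod_cast hn1
      have e2 : ((n:ℝ)/d) ^ ((1:ℝ)/(2*d)) ≤ (m:ℝ) ^ ((m:ℝ)/(2*n)) := by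
        calc ((n:ℝ)/d) ^ ((1:ℝ)/(2*d)) ≤ (m:ℝ) ^ ((1:ℝ)/(2*d)) := by
              refine Real.rpow_le_rpow (by positivity) ?_ (by positivity)
              rw [div_le_iff₀ hd0]; linarith [hdm]
          _ ≤ (m:ℝ) ^ ((m:ℝ)/(2*n)) := by
              refine Real.rpow_le_rpow_of_exponent_le hmR ?_
              rw [div_le_div_iff₀ (by positivity) (by positivity)]
              nlinarith [hdm, hmR]
      exact mul_le_mul (mul_le_mul e1 le_rfl (inv_nonneg.2 hK0.le) (by positivity)) e2
        (by positivity) (by positivity)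
    calc g n ≤ c ^ ((n:ℝ)⁻¹) * K⁻¹ * (m:ℝ) ^ ((m:ℝ)/(2*n)) := hcomp
      _ = (c * ((K:ℝ) ^ n)⁻¹ * (m:ℝ) ^ ((m:ℝ)/2)) ^ ((n:ℝ)⁻¹) := hrw.symm
      _ ≤ N α ^ ((n:ℝ)⁻¹) := Real.rpow_le_rpow (by positivity) hNlb (by positivity)
  refine tendsto_atTop_mono' _ ?_ (hg.comp tendsto_comap)
  rw [Filter.EventuallyLE, Filter.eventually_comap]
  filter_upwards [Filter.eventually_ge_atTop d] with n hn α hα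
  have hcast : (∑ j, (α j : ℝ)) = (n:ℝ) := by
    rw [← Nat.cast_sum, hα]
  calc (g ∘ fun α : Fin d → ℕ => ∑ j, α j) α = g n := by simp [hα]
    _ ≤ N α ^ ((n:ℝ)⁻¹) := key n hn α hα
    _ = N α ^ ((∑ j, (α j : ℝ))⁻¹) := by rw [hcast]
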